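/- Let G = (V, E) be a finite connected simple undirected graph with at least one edge and let k ≥ 1 be a natural number. Let G' be the graph on vertex set V ⊎ E in which v ∈ V is adjacent to e ∈ E if and only if v is an endpoint of e (and there are no other edges), i.e., G' is obtained from G by subdividing every edge once, and let T = E ⊆ V(G') be the set of subdivision vertices. Then G has a set X ⊆ V with |X| ≤ k such that X is a vertex cover of G and G[X] is connected, if and only if G' has a set X' ⊆ V ⊎ E with T ⊆ X', |X'| ≤ |E| + k, and G'[X'] connected. -/

import Mathlib

/-- The subdivision of `G`: the graph on `V ⊕ E(G)` in which `v : V` is adjacent to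
`e : E(G)` if and only if `v` is an endpoint of `e`, and there are no other edges. -/
def Subdiv {V : Type} (G : SimpleGraph V) : SimpleGraph (V ⊕ G.edgeSet) where
  Adj a b :=
    (∃ (v : V) (e : G.edgeSet), a = Sum.inl v ∧ b = Sum.inr e ∧ v ∈ (e : Sym2 V)) ∨
    (∃ (v : V) (e : G.edgeSet), a = Sum.inr e ∧ b = Sum.inl v ∧ v ∈ (e : Sym2 V))
  symm := by
    constructor
    rintro a b (⟨v, e, rfl, rfl, h⟩ | ⟨v, e, rfl, rfl, h⟩)
    · exact Or.inr ⟨v, e, rfl, rfl, h⟩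
    · exact Or.inl ⟨v, e, rfl, rfl, h⟩
  loopless := by
    constructor
    rintro a (⟨v, e, rfl, h, -⟩ | ⟨v, e, rfl, h, -⟩) <;> simp_all

namespace CVCaux
open SimpleGraph

variable {V : Type} {G : SimpleGraph V}

lemma adj_inl_inr {v : V} {e : G.edgeSet} (h : v ∈ (e : Sym2 V)) :
    (Subdiv G).Adj (Sum.inl v) (Sum.inr e) := Or.inl ⟨v, e, rfl, rfl, h⟩

lemma adj_of_mem_mem {x y : V} {e : G.edgeSet} (hx : x ∈ (e : Sym2 V))
    (hy : y ∈ (e : Sym2 V)) (hne : x ≠ y) : G.Adj x y := by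
  have h : (e : Sym2 V) = s(x, y) := (Sym2.mem_and_mem_iff hne).mp ⟨hx, hy⟩
  have he := e.prop
  rw [h] at he
  exact G.mem_edgeSet.mp he

lemma reach_induce_of {X : Set V} {x y : V} (hx : x ∈ X) (hy : y ∈ X)
    (h : x = y ∨ G.Adj x y) : (G.induce X).Reachable ⟨x, hx⟩ ⟨y, hy⟩ := by
  rcases h with rfl | h
  · exact Reachable.refl _
  · exact Adj.reachable (show (G.induce X).Adj ⟨x, hx⟩ ⟨y, hy⟩ from h)

/-- backward walk transfer -/
lemma back_reach {S : Set (V ⊕ G.edgeSet)} {X : Set V}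
    (hX : ∀ x : V, Sum.inl x ∈ S → x ∈ X) :
    ∀ {a b : S} (_ : ((Subdiv G).induce S).Walk a b) {x y : V}
      (hx : x ∈ X) (hy : y ∈ X),
      (a.val = Sum.inl x ∨ ∃ e : G.edgeSet, a.val = Sum.inr e ∧ x ∈ (e : Sym2 V)) →
      (b.val = Sum.inl y ∨ ∃ e : G.edgeSet, b.val = Sum.inr e ∧ y ∈ (e : Sym2 V)) →
      (G.induce X).Reachable ⟨x, hx⟩ ⟨y, hy⟩ := by
  intro a b w
  induction w with
  | nil =>
    intro x y hx hy hax hay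
    rcases hax with h1 | ⟨e, h1, hxe⟩ <;> rcases hay with h2 | ⟨e', h2, hye⟩
    · rw [h1] at h2
      exact reach_induce_of hx hy (Or.inl (Sum.inl.inj h2))
    · rw [h1] at h2; exact absurd h2 (by simp)
    · rw [h1] at h2; exact absurd h2 (by simp)
    · rw [h1] at h2
      have : e = e' := Sum.inr.inj h2
      subst this
      by_cases hxy : x = y
      · exact reach_induce_of hx hy (Or.inl hxy)
      · exact reach_induce_of hx hy (Or.inr (adj_of_mem_mem hxe hye hxy))
  | @cons a c b h p ih =>
    intro x y hx hy hax hay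
    have hadj : (Subdiv G).Adj a.val c.val := h
    rcases hadj with ⟨v, e, ha, hc, hve⟩ | ⟨v, e, ha, hc, hve⟩
    · -- a = inl v, c = inr e
      rcases hax with h1 | ⟨e', h1, hxe⟩
      · rw [ha] at h1
        have hxv : v = x := Sum.inl.inj h1
        subst hxv
        exact ih hx hy (Or.inr ⟨e, hc, hve⟩) hay
      · rw [ha] at h1; exact absurd h1 (by simp)
    · -- a = inr e, c = inl v
      rcases hax with h1 | ⟨e', h1, hxe⟩
      · rw [ha] at h1; exact absurd h1 (by simp)
      · rw [ha] at h1
        have : e = e' := Sum.inr.inj h1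
        subst this
        have hvS : Sum.inl v ∈ S := hc ▸ c.prop
        have hvX : v ∈ X := hX v hvS
        have r1 : (G.induce X).Reachable ⟨x, hx⟩ ⟨v, hvX⟩ := by
          by_cases hxy : x = v
          · exact reach_induce_of hx hvX (Or.inl hxy)
          · exact reach_induce_of hx hvX (Or.inr (adj_of_mem_mem hxe hve hxy))
        exact r1.trans (ih hvX hy (Or.inl hc) hay)

/-- forward walk transfer -/
lemma fwd_reach {X : Set V} {S : Set (V ⊕ G.edgeSet)}
    (hS1 : ∀ x ∈ X, Sum.inl x ∈ S) (hS2 : ∀ e : G.edgeSet, Sum.inr e ∈ S) :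
    ∀ {a b : X} (_ : (G.induce X).Walk a b),
      ((Subdiv G).induce S).Reachable ⟨Sum.inl a.val, hS1 _ a.prop⟩
        ⟨Sum.inl b.val, hS1 _ b.prop⟩ := by
  intro a b w
  induction w with
  | nil => exact Reachable.refl _
  | @cons a c b h p ih =>
    have hadj : G.Adj a.val c.val := h
    have hmem : (s(a.val, c.val) : Sym2 V) ∈ G.edgeSet := G.mem_edgeSet.mpr hadj
    set e : G.edgeSet := ⟨s(a.val, c.val), hmem⟩ with he
    have h1 : ((Subdiv G).induce S).Adj ⟨Sum.inl a.val, hS1 _ a.prop⟩ ⟨Sum.inr e, hS2 e⟩ :=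
      adj_inl_inr (by simp [he])
    have h2 : ((Subdiv G).induce S).Adj ⟨Sum.inl c.val, hS1 _ c.prop⟩ ⟨Sum.inr e, hS2 e⟩ :=
      adj_inl_inr (by simp [he])
    exact (h1.reachable.trans h2.reachable.symm).trans ih

lemma exists_neighbor {W : Type} {H : SimpleGraph W} {a b : W} (hne : a ≠ b)
    (h : H.Reachable a b) : ∃ c, H.Adj a c := by
  obtain ⟨w⟩ := h
  cases w with
  | nil => exact absurd rfl hne
  | cons h _ => exact ⟨_, h⟩

lemma subdiv_connected {X : Set V} {S : Set (V ⊕ G.edgeSet)}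
    (hS1 : ∀ x ∈ X, Sum.inl x ∈ S) (hS2 : ∀ e : G.edgeSet, Sum.inr e ∈ S)
    (hSmem : ∀ a ∈ S, (∃ x ∈ X, a = Sum.inl x) ∨ ∃ e : G.edgeSet, a = Sum.inr e)
    (hcover : ∀ u v, G.Adj u v → u ∈ X ∨ v ∈ X)
    (hXconn : (G.induce X).Connected) :
    ((Subdiv G).induce S).Connected := by
  obtain ⟨x0⟩ := hXconn.nonempty
  have keyl : ∀ (u : V) (hu : u ∈ X),
      ((Subdiv G).induce S).Reachable ⟨Sum.inl u, hS1 _ hu⟩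
        ⟨Sum.inl x0.val, hS1 _ x0.prop⟩ := by
    intro u hu
    obtain ⟨w⟩ := hXconn.preconnected ⟨u, hu⟩ x0
    exact fwd_reach hS1 hS2 w
  have key : ∀ a : S, ((Subdiv G).induce S).Reachable a ⟨Sum.inl x0.val, hS1 _ x0.prop⟩ := by
    rintro ⟨a, ha⟩
    rcases hSmem a ha with ⟨u, hu, rfl⟩ | ⟨e, rfl⟩
    · exact keyl u hu
    · obtain ⟨p, q, hpq⟩ : ∃ p q, (e : Sym2 V) = s(p, q) :=
        Sym2.inductionOn (e : Sym2 V) (fun x y => ⟨x, y, rfl⟩)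
      have hadj : G.Adj p q := by
        have := e.prop; rw [hpq] at this; exact G.mem_edgeSet.mp this
      have hstep : ∀ (w : V) (hw : w ∈ X) (_ : w ∈ (e : Sym2 V)),
          ((Subdiv G).induce S).Reachable ⟨Sum.inr e, ha⟩
            ⟨Sum.inl x0.val, hS1 _ x0.prop⟩ := by
        intro w hw hwe
        have h1 : ((Subdiv G).induce S).Adj ⟨Sum.inl w, hS1 _ hw⟩ ⟨Sum.inr e, ha⟩ :=
          adj_inl_inr hwe
        exact h1.symm.reachable.trans (keyl w hw)
      rcases hcover p q hadj with hp | hq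
      · exact hstep p hp (by rw [hpq]; simp)
      · exact hstep q hq (by rw [hpq]; simp)
  haveI : Nonempty S := ⟨⟨Sum.inl x0.val, hS1 _ x0.prop⟩⟩
  exact ⟨fun a b => (key a).trans (key b).symm⟩

end CVCaux

open CVCaux

/-- `G` has a connected vertex cover of size at most `k` if and only if its subdivision `G'`
has a set `X'` containing all subdivision vertices, of size at most `|E| + k`, inducing a
connected subgraph (i.e. a Steiner tree instance with the subdivision vertices as
terminals). -/
theorem cvc_iff_steiner_subdivision {V : Type} [Fintype V] [DecidableEq V]
    (G : SimpleGraph V) (hconn : G.Connected) (hE : G.edgeSet.Nonempty)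
    (k : ℕ) (hk : 1 ≤ k) :
    (∃ X : Finset V, X.card ≤ k ∧ (∀ u v, G.Adj u v → u ∈ X ∨ v ∈ X) ∧
      (G.induce (X : Set V)).Connected) ↔
    (∃ X' : Finset (V ⊕ G.edgeSet), (∀ e : G.edgeSet, Sum.inr e ∈ X') ∧
      X'.card ≤ Nat.card G.edgeSet + k ∧
      ((Subdiv G).induce (X' : Set (V ⊕ G.edgeSet))).Connected) := by
  classical
  haveI : Fintype G.edgeSet := Fintype.ofFinite _
  have hNcard : Nat.card G.edgeSet = Fintype.card G.edgeSet := Nat.card_eq_fintype_card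
  constructor
  · rintro ⟨X, hcard, hcover, hXconn⟩
    refine ⟨X.image Sum.inl ∪ (Finset.univ : Finset G.edgeSet).image Sum.inr, ?_, ?_, ?_⟩
    · intro e; simp
    · have hdisj : Disjoint (X.image (Sum.inl : V → V ⊕ G.edgeSet))
          ((Finset.univ : Finset G.edgeSet).image Sum.inr) := by
        simp [Finset.disjoint_left]
      rw [Finset.card_union_of_disjoint hdisj,
        Finset.card_image_of_injective _ Sum.inl_injective,
        Finset.card_image_of_injective _ Sum.inr_injective, Finset.card_univ, hNcard]
      omega
    · refine subdiv_connected ?_ ?_ ?_ hcover hXconn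
      · intro x hx
        simp only [Finset.coe_union, Finset.coe_image, Set.mem_union, Set.mem_image]
        exact Or.inl ⟨x, by simpa using hx, rfl⟩
      · intro e; simp
      · intro a ha
        simp at ha
        rcases ha with ⟨x, hx, rfl⟩ | ⟨e, he, rfl⟩
        · exact Or.inl ⟨x, by simpa using hx, rfl⟩
        · exact Or.inr ⟨⟨e, he⟩, rfl⟩
  · rintro ⟨X', hT, hcard, hconn'⟩
    by_cases hA : ∃ v : V, Sum.inl v ∈ X'
    · obtain ⟨v0, hv0⟩ := hA
      set X : Finset V := Finset.univ.filter (fun v => Sum.inl v ∈ X') with hXdef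
      have hmem : ∀ x : V, x ∈ X ↔ Sum.inl x ∈ X' := by intro x; simp [hXdef]
      have hXcoe : ∀ x : V, Sum.inl x ∈ (X' : Set (V ⊕ G.edgeSet)) → x ∈ ((X : Finset V) : Set V) := by
        intro x hx; simp [hXdef]; simpa using hx
      refine ⟨X, ?_, ?_, ?_⟩
      · -- cardinality
        have hsub : X.image Sum.inl ∪ (Finset.univ : Finset G.edgeSet).image Sum.inr ⊆ X' := by
          intro a ha
          rcases Finset.mem_union.mp ha with h | h
          · obtain ⟨x, hx, rfl⟩ := Finset.mem_image.mp h
            exact (hmem x).mp hx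
          · obtain ⟨e, _, rfl⟩ := Finset.mem_image.mp h
            exact hT e
        have hdisj : Disjoint (X.image (Sum.inl : V → V ⊕ G.edgeSet))
            ((Finset.univ : Finset G.edgeSet).image Sum.inr) := by
          simp [Finset.disjoint_left]
        have hle := Finset.card_le_card hsub
        rw [Finset.card_union_of_disjoint hdisj,
          Finset.card_image_of_injective _ Sum.inl_injective,
          Finset.card_image_of_injective _ Sum.inr_injective, Finset.card_univ] at hle
        rw [hNcard] at hcard
        omega
      · -- vertex cover
        intro u v huv
        set e : G.edgeSet := ⟨s(u, v), G.mem_edgeSet.mpr huv⟩ with he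
        have hne : (⟨Sum.inr e, hT e⟩ : (X' : Set (V ⊕ G.edgeSet))) ≠ ⟨Sum.inl v0, hv0⟩ := by
          simp
        obtain ⟨c, hc⟩ := exists_neighbor hne
          (hconn'.preconnected ⟨Sum.inr e, hT e⟩ ⟨Sum.inl v0, hv0⟩)
        have hadj : (Subdiv G).Adj (Sum.inr e) c.val := hc
        rcases hadj with ⟨w, e', h1, h2, hwe⟩ | ⟨w, e', h1, h2, hwe⟩
        · exact absurd h1 (by simp)
        · have : e' = e := Sum.inr.inj h1.symm
          subst this
          have hwX : w ∈ X := (hmem w).mpr (h2 ▸ c.prop)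
          rw [he] at hwe
          rcases Sym2.mem_iff.mp hwe with rfl | rfl
          · exact Or.inl hwX
          · exact Or.inr hwX
      · -- connectivity
        haveI : Nonempty ((X : Finset V) : Set V) := ⟨⟨v0, by simp [hXdef]; exact hv0⟩⟩
        refine ⟨?_⟩
        rintro ⟨x, hx⟩ ⟨y, hy⟩
        have hx' : Sum.inl x ∈ (X' : Set (V ⊕ G.edgeSet)) := by
          have := hx; simp [hXdef] at this; simpa using this
        have hy' : Sum.inl y ∈ (X' : Set (V ⊕ G.edgeSet)) := by
          have := hy; simp [hXdef] at this; simpa using this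
        obtain ⟨w⟩ := hconn'.preconnected ⟨Sum.inl x, hx'⟩ ⟨Sum.inl y, hy'⟩
        exact back_reach hXcoe w hx hy (Or.inl rfl) (Or.inl rfl)
    · -- no original vertex in X' : X' consists of subdivision vertices only
      push_neg at hA
      have honly : ∀ e e' : G.edgeSet, e = e' := by
        intro e e'
        have h := hconn'.preconnected ⟨Sum.inr e, hT e⟩ ⟨Sum.inr e', hT e'⟩
        obtain ⟨w⟩ := h
        have : (⟨Sum.inr e, hT e⟩ : (X' : Set (V ⊕ G.edgeSet))) = ⟨Sum.inr e', hT e'⟩ := by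
          cases w with
          | nil => rfl
          | @cons _ c _ h' _ =>
            have hadj : (Subdiv G).Adj (Sum.inr e) c.val := h'
            rcases hadj with ⟨v, f, h1, h2, _⟩ | ⟨v, f, h1, h2, _⟩
            · exact absurd h1 (by simp)
            · have hvX' : Sum.inl v ∈ (X' : Set (V ⊕ G.edgeSet)) := h2 ▸ c.prop
              exact absurd (by simpa using hvX') (hA v)
        have h2 := congrArg Subtype.val this
        exact Sum.inr.inj h2
      obtain ⟨e0, he0⟩ := hE
      obtain ⟨p, q, hpq⟩ : ∃ p q, e0 = s(p, q) :=
        Sym2.inductionOn e0 (fun x y => ⟨x, y, rfl⟩)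
      refine ⟨{p}, by simpa using hk, ?_, ?_⟩
      · intro u v huv
        have : (⟨s(u, v), G.mem_edgeSet.mpr huv⟩ : G.edgeSet) = ⟨e0, he0⟩ := honly _ _
        have h2 := congrArg Subtype.val this
        simp only at h2
        rw [hpq] at h2
        rcases Sym2.eq_iff.mp h2 with ⟨h3, h4⟩ | ⟨h3, h4⟩
        · exact Or.inl (Finset.mem_singleton.mpr h3)
        · exact Or.inr (Finset.mem_singleton.mpr h4)
      · haveI : Nonempty (({p} : Finset V) : Set V) := ⟨⟨p, by simp⟩⟩
        refine ⟨?_⟩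
        rintro ⟨x, hx⟩ ⟨y, hy⟩
        have hx' : x = p := by simpa using hx
        have hy' : y = p := by simpa using hy
        subst hx'; subst hy'
        exact SimpleGraph.Reachable.refl _
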